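/- Suppose ‖I − X̃ᵀX̃‖ ≤ ε with 0 < ε ≤ min_i(σ_i² + λ)/(2 max_i σ_i²), Σ = diag(σ_1,…,σ_d) with σ_i > 0, and λ > 0. Then ‖Σ²(Σ²X̃ᵀX̃ + λI)⁻¹(I − X̃ᵀX̃) Σθ*‖₂ ≤ 2ε (max_i σ_i²)/(min_i (σ_i² + λ)) ‖Σθ*‖₂. -/

import Mathlib

open Matrix

/-- Spectral (operator) norm of a square real matrix. -/
noncomputable def opN {d : ℕ} (M : Matrix (Fin d) (Fin d) ℝ) : ℝ :=
  ‖Matrix.toEuclideanCLM (𝕜 := ℝ) M‖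

/-- Euclidean norm of a vector. -/
noncomputable def norm2 {d : ℕ} (v : Fin d → ℝ) : ℝ :=
  Real.sqrt (∑ i, v i ^ 2)

namespace ResidualAux

variable {d : ℕ}

lemma norm2_eq (v : Fin d → ℝ) :
    norm2 v = ‖(WithLp.equiv 2 (Fin d → ℝ)).symm v‖ := by
  rw [norm2, EuclideanSpace.norm_eq]
  congr 1
  refine Finset.sum_congr rfl fun i _ => ?_
  rw [WithLp.equiv_symm_apply, WithLp.ofLp_toLp, Real.norm_eq_abs, sq_abs]

lemma clm_apply (A : Matrix (Fin d) (Fin d) ℝ) (u : Fin d → ℝ) :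
    Matrix.toEuclideanCLM (𝕜 := ℝ) A ((WithLp.equiv 2 (Fin d → ℝ)).symm u)
      = (WithLp.equiv 2 (Fin d → ℝ)).symm (A.mulVec u) := by
  rw [WithLp.equiv_symm_apply, Matrix.toEuclideanCLM_toLp]

lemma norm2_nonneg (v : Fin d → ℝ) : 0 ≤ norm2 v := Real.sqrt_nonneg _

lemma norm2_mulVec_le (A : Matrix (Fin d) (Fin d) ℝ) (u : Fin d → ℝ) :
    norm2 (A.mulVec u) ≤ opN A * norm2 u := by
  rw [norm2_eq, norm2_eq, ← clm_apply]
  exact ContinuousLinearMap.le_opNorm _ _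

lemma opN_nonneg (A : Matrix (Fin d) (Fin d) ℝ) : 0 ≤ opN A := norm_nonneg _

lemma opN_mul_le (A B : Matrix (Fin d) (Fin d) ℝ) : opN (A * B) ≤ opN A * opN B := by
  rw [opN, opN, opN, _root_.map_mul]
  exact norm_mul_le _ _

lemma opN_add_le (A B : Matrix (Fin d) (Fin d) ℝ) : opN (A + B) ≤ opN A + opN B := by
  rw [opN, opN, opN, _root_.map_add]
  exact norm_add_le _ _

lemma opN_one_le : opN (1 : Matrix (Fin d) (Fin d) ℝ) ≤ 1 := by
  rw [opN, _root_.map_one, ContinuousLinearMap.one_def]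
  exact ContinuousLinearMap.norm_id_le

lemma opN_diagonal_le (w : Fin d → ℝ) (c : ℝ) (hc : 0 ≤ c) (h : ∀ i, |w i| ≤ c) :
    opN (Matrix.diagonal w) ≤ c := by
  show ‖Matrix.toEuclideanCLM (𝕜 := ℝ) (Matrix.diagonal w)‖ ≤ c
  apply ContinuousLinearMap.opNorm_le_bound _ hc
  intro x
  have hx : x = (WithLp.equiv 2 (Fin d → ℝ)).symm (WithLp.equiv 2 (Fin d → ℝ) x) :=
    ((WithLp.equiv 2 (Fin d → ℝ)).symm_apply_apply x).symm
  set u := WithLp.equiv 2 (Fin d → ℝ) x with hu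
  rw [hx, clm_apply, ← norm2_eq, ← norm2_eq, norm2, norm2, ← Real.sqrt_sq hc,
    ← Real.sqrt_mul (by positivity)]
  apply Real.sqrt_le_sqrt
  rw [Finset.mul_sum]
  apply Finset.sum_le_sum
  intro i _
  rw [Matrix.mulVec_diagonal]
  have hw2 : w i ^ 2 ≤ c ^ 2 := by
    nlinarith [sq_abs (w i), abs_nonneg (w i), h i]
  nlinarith [sq_nonneg (u i), hw2]

end ResidualAux

open ResidualAux in
/-- If `‖I − X̃ᵀX̃‖ ≤ ε` with `0 < ε ≤ min_i(σ_i² + λ)/(2 max_i σ_i²)`, `σ_i > 0`, `λ > 0`,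
then `‖Σ²(Σ²X̃ᵀX̃ + λI)⁻¹(I − X̃ᵀX̃)Σθ*‖₂ ≤ 2ε (max_i σ_i²)/(min_i(σ_i² + λ)) ‖Σθ*‖₂`. -/
theorem residual_first_term_bound (d n : ℕ) (hd : 0 < d) (σi : Fin d → ℝ)
    (hσi : ∀ i, 0 < σi i) (lam ε : ℝ) (hlam : 0 < lam) (hε0 : 0 < ε)
    (Xt : Matrix (Fin n) (Fin d) ℝ) (θstar : Fin d → ℝ)
    (hε1 : opN (1 - Xtᵀ * Xt) ≤ ε)
    (hε2 : ε ≤ (⨅ i, (σi i ^ 2 + lam)) / (2 * ⨆ i, σi i ^ 2)) :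
    let Sm := Matrix.diagonal σi
    norm2 ((Sm ^ 2 * (Sm ^ 2 * (Xtᵀ * Xt) + lam • (1 : Matrix (Fin d) (Fin d) ℝ))⁻¹
          * (1 - Xtᵀ * Xt)).mulVec (Sm.mulVec θstar))
      ≤ 2 * ε * (⨆ i, σi i ^ 2) / (⨅ i, (σi i ^ 2 + lam)) * norm2 (Sm.mulVec θstar) := by
  intro Sm
  haveI : Nonempty (Fin d) := ⟨⟨0, hd⟩⟩
  set A := Xtᵀ * Xt with hA
  set E := (1 : Matrix (Fin d) (Fin d) ℝ) - A with hE
  set mx := ⨆ i, σi i ^ 2 with hmx_def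
  set mn := ⨅ i, (σi i ^ 2 + lam) with hmn_def
  have hmx_le : ∀ i, σi i ^ 2 ≤ mx :=
    fun i => le_ciSup (f := fun i => σi i ^ 2) (Set.Finite.bddAbove (Set.finite_range _)) i
  have hmn_le : ∀ i, mn ≤ σi i ^ 2 + lam :=
    fun i => ciInf_le (f := fun i => σi i ^ 2 + lam) (Set.Finite.bddBelow (Set.finite_range _)) i
  have hmx_pos : 0 < mx :=
    lt_of_lt_of_le (by have := hσi ⟨0, hd⟩; positivity) (hmx_le ⟨0, hd⟩)
  have hmn_pos : 0 < mn := by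
    obtain ⟨i, hi⟩ := exists_eq_ciInf_of_finite (f := fun i => σi i ^ 2 + lam)
    rw [hmn_def, ← hi]
    have := hσi i; positivity
  have hSm : Sm = Matrix.diagonal σi := rfl
  have hσ2 : Sm ^ 2 = Matrix.diagonal (fun i => σi i ^ 2) := by
    rw [hSm, sq, Matrix.diagonal_mul_diagonal]
    congr 1; ext i; ring
  set D := Matrix.diagonal (fun i => σi i ^ 2 + lam) with hD_def
  set Dinv := Matrix.diagonal (fun i => (σi i ^ 2 + lam)⁻¹) with hDinv_def
  have hDDinv : D * Dinv = 1 := by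
    rw [hD_def, hDinv_def, Matrix.diagonal_mul_diagonal]
    have hfun : (fun i => (σi i ^ 2 + lam) * (σi i ^ 2 + lam)⁻¹) = fun _ : Fin d => (1 : ℝ) := by
      funext i
      exact mul_inv_cancel₀ (by have := hσi i; positivity)
    rw [hfun, Matrix.diagonal_one]
  have hDinv_eq : D⁻¹ = Dinv := Matrix.inv_eq_right_inv hDDinv
  have hD : Sm ^ 2 + lam • (1 : Matrix (Fin d) (Fin d) ℝ) = D := by
    ext i j
    rcases eq_or_ne i j with h | h
    · subst h
      simp [hσ2, hD_def, Matrix.add_apply, Matrix.smul_apply, Matrix.diagonal_apply_eq,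
        Matrix.one_apply_eq, smul_eq_mul, mul_one]
    · simp [hσ2, hD_def, Matrix.add_apply, Matrix.smul_apply, Matrix.diagonal_apply_ne _ h,
        Matrix.one_apply_ne h, smul_eq_mul, mul_zero]
  set W' := Dinv * Sm ^ 2 * E with hW'_def
  set W := (1 : Matrix (Fin d) (Fin d) ℝ) - W' with hW_def
  have hM : Sm ^ 2 * A + lam • (1 : Matrix (Fin d) (Fin d) ℝ) = D * W := by
    rw [hW_def, mul_sub, mul_one, hW'_def]
    have h1 : D * (Dinv * Sm ^ 2 * E) = Sm ^ 2 * E := by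
      rw [← mul_assoc, ← mul_assoc, hDDinv, one_mul]
    rw [h1, ← hD, hE, mul_sub, mul_one]
    abel
  -- operator norm bounds
  have hS2 : opN (Sm ^ 2) ≤ mx := by
    rw [hσ2]
    exact opN_diagonal_le _ _ hmx_pos.le fun i => by
      rw [abs_of_nonneg (sq_nonneg _)]; exact hmx_le i
  have hDinvN : opN Dinv ≤ mn⁻¹ := by
    rw [hDinv_def]
    refine opN_diagonal_le _ _ (by positivity) fun i => ?_
    rw [abs_of_nonneg (by have := hσi i; positivity)]
    exact inv_anti₀ hmn_pos (hmn_le i)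
  have hW'N : opN W' ≤ mn⁻¹ * mx * ε := by
    calc opN W' ≤ opN (Dinv * Sm ^ 2) * opN E := opN_mul_le _ _
      _ ≤ (opN Dinv * opN (Sm ^ 2)) * opN E := by
          exact mul_le_mul_of_nonneg_right (opN_mul_le _ _) (opN_nonneg _)
      _ ≤ (mn⁻¹ * mx) * ε := by
          apply mul_le_mul _ hε1 (opN_nonneg _) (by positivity)
          exact mul_le_mul hDinvN hS2 (opN_nonneg _) (by positivity)
      _ = mn⁻¹ * mx * ε := rfl
  have hhalf : mn⁻¹ * mx * ε ≤ 1 / 2 := by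
    have h1 : mn⁻¹ * mx * ε ≤ mn⁻¹ * mx * (mn / (2 * mx)) := by
      apply mul_le_mul_of_nonneg_left hε2 (by positivity)
    have h2 : mn⁻¹ * mx * (mn / (2 * mx)) = 1 / 2 := by
      field_simp
    linarith
  have hW'N2 : opN W' ≤ 1 / 2 := hW'N.trans hhalf
  -- W is a unit
  have hW_unit : IsUnit W := by
    have hlt : ‖Matrix.toEuclideanCLM (𝕜 := ℝ) W'‖ < 1 := by
      have : opN W' < 1 := lt_of_le_of_lt hW'N2 (by norm_num)
      exact this
    have himg : Matrix.toEuclideanCLM (𝕜 := ℝ) W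
        = 1 - Matrix.toEuclideanCLM (𝕜 := ℝ) W' := by
      rw [hW_def, _root_.map_sub, _root_.map_one]
    have hu : IsUnit (Matrix.toEuclideanCLM (𝕜 := ℝ) W) := by
      rw [himg]; exact (Units.oneSub _ hlt).isUnit
    have := hu.map (Matrix.toEuclideanCLM (𝕜 := ℝ) (n := Fin d)).symm
    simpa using this
  have hWdet : IsUnit W.det := (Matrix.isUnit_iff_isUnit_det W).mp hW_unit
  have hWW : W * W⁻¹ = 1 := Matrix.mul_nonsing_inv _ hWdet
  have hWinvN : opN W⁻¹ ≤ 2 := by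
    have hid : W⁻¹ = 1 + W' * W⁻¹ := by
      have h1 : (1 - W') * W⁻¹ = 1 := by rw [← hW_def]; exact hWW
      calc W⁻¹ = (1 - W') * W⁻¹ + W' * W⁻¹ := by rw [sub_mul, one_mul]; abel
        _ = 1 + W' * W⁻¹ := by rw [h1]
    have h2 : opN W⁻¹ ≤ 1 + (1 / 2) * opN W⁻¹ := by
      calc opN W⁻¹ = opN (1 + W' * W⁻¹) := by rw [← hid]
        _ ≤ opN 1 + opN (W' * W⁻¹) := opN_add_le _ _
        _ ≤ 1 + opN W' * opN W⁻¹ := add_le_add opN_one_le (opN_mul_le _ _)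
        _ ≤ 1 + (1 / 2) * opN W⁻¹ := by
            have := mul_le_mul_of_nonneg_right hW'N2 (opN_nonneg W⁻¹)
            linarith
    linarith [opN_nonneg W⁻¹]
  have hMinv : (Sm ^ 2 * A + lam • (1 : Matrix (Fin d) (Fin d) ℝ))⁻¹ = W⁻¹ * Dinv := by
    rw [hM, Matrix.mul_inv_rev, hDinv_eq]
  -- final bound on operator norm of the product
  have hcoef : opN (Sm ^ 2 * (Sm ^ 2 * A + lam • (1 : Matrix (Fin d) (Fin d) ℝ))⁻¹ * E)
      ≤ 2 * ε * mx / mn := by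
    rw [hMinv]
    calc opN (Sm ^ 2 * (W⁻¹ * Dinv) * E)
        ≤ opN (Sm ^ 2 * (W⁻¹ * Dinv)) * opN E := opN_mul_le _ _
      _ ≤ (opN (Sm ^ 2) * opN (W⁻¹ * Dinv)) * opN E :=
          mul_le_mul_of_nonneg_right (opN_mul_le _ _) (opN_nonneg _)
      _ ≤ (mx * (2 * mn⁻¹)) * ε := by
          apply mul_le_mul _ hε1 (opN_nonneg _) (by positivity)
          apply mul_le_mul hS2 _ (opN_nonneg _) hmx_pos.le
          calc opN (W⁻¹ * Dinv) ≤ opN W⁻¹ * opN Dinv := opN_mul_le _ _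
            _ ≤ 2 * mn⁻¹ := mul_le_mul hWinvN hDinvN (opN_nonneg _) (by norm_num)
      _ = 2 * ε * mx / mn := by field_simp
  calc norm2 ((Sm ^ 2 * (Sm ^ 2 * A + lam • (1 : Matrix (Fin d) (Fin d) ℝ))⁻¹ * E).mulVec
        (Sm.mulVec θstar))
      ≤ opN (Sm ^ 2 * (Sm ^ 2 * A + lam • (1 : Matrix (Fin d) (Fin d) ℝ))⁻¹ * E)
          * norm2 (Sm.mulVec θstar) := norm2_mulVec_le _ _
    _ ≤ 2 * ε * mx / mn * norm2 (Sm.mulVec θstar) :=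
        mul_le_mul_of_nonneg_right hcoef (norm2_nonneg _)
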